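/- (Uniqueness for the extended Maxwell model.) Let N ≥ 1. Suppose G̃₁(t) = ∑_{j=1}^N e^{t α_{1,j}} β_{1,j} and G̃₂(t) = ∑_{j=1}^N e^{t α_{2,j}} β_{2,j}, where within each family the α's are pairwise distinct reals and the β's are nonzero reals. If (d/dt)^k G̃₁(0) = (d/dt)^k G̃₂(0) for all k = 0, 1, ..., 2N-1, then the multisets {(α_{1,j}, β_{1,j})} and {(α_{2,j}, β_{2,j})} coincide, hence G̃₁(t) = G̃₂(t) for all t. -/

import Mathlib

open Finset

private lemma expsum_iteratedDeriv {N : ℕ} (a b : Fin N → ℝ) (k : ℕ) :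
    iteratedDeriv k (fun t : ℝ => ∑ j, Real.exp (t * a j) * b j)
      = fun t => ∑ j, a j ^ k * (Real.exp (t * a j) * b j) := by
  induction k with
  | zero => simp
  | succ k ih =>
    rw [iteratedDeriv_succ, ih]
    funext t
    have hd : HasDerivAt (fun t : ℝ => ∑ j, a j ^ k * (Real.exp (t * a j) * b j))
        (∑ j, a j ^ (k + 1) * (Real.exp (t * a j) * b j)) t := by
      apply HasDerivAt.fun_sum
      intro j _
      have h1 : HasDerivAt (fun t : ℝ => Real.exp (t * a j)) (Real.exp (t * a j) * a j) t :=
        (hasDerivAt_mul_const (a j)).exp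
      have h2 := (h1.mul_const (b j)).const_mul (a j ^ k)
      convert h2 using 1
      case e'_9 => ring
      rfl
    exact hd.deriv

private lemma vandermonde_vanish (s : Finset ℝ) (f : ℝ → ℝ)
    (h : ∀ k < s.card, ∑ x ∈ s, x ^ k * f x = 0) :
    ∀ x ∈ s, f x = 0 := by
  intro x0 hx0
  set P : Polynomial ℝ := ∏ y ∈ s.erase x0, (Polynomial.X - Polynomial.C y) with hP
  have hdeg : P.natDegree < s.card := by
    calc P.natDegree ≤ ∑ y ∈ s.erase x0, (Polynomial.X - Polynomial.C y).natDegree :=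
          Polynomial.natDegree_prod_le _ _
      _ ≤ ∑ _y ∈ s.erase x0, 1 := by
          apply Finset.sum_le_sum
          intro y _
          exact le_of_eq (Polynomial.natDegree_X_sub_C y)
      _ = (s.erase x0).card := by simp
      _ < s.card := Finset.card_erase_lt_of_mem hx0
  have key : ∑ x ∈ s, P.eval x * f x = 0 := by
    have heval : ∀ x : ℝ, P.eval x = ∑ k ∈ Finset.range (P.natDegree + 1), P.coeff k * x ^ k :=
      fun x => Polynomial.eval_eq_sum_range x
    calc ∑ x ∈ s, P.eval x * f x
        = ∑ x ∈ s, ∑ k ∈ Finset.range (P.natDegree + 1), P.coeff k * (x ^ k * f x) := by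
          apply Finset.sum_congr rfl
          intro x _
          rw [heval x, Finset.sum_mul]
          apply Finset.sum_congr rfl
          intro k _
          ring
      _ = ∑ k ∈ Finset.range (P.natDegree + 1), ∑ x ∈ s, P.coeff k * (x ^ k * f x) :=
          Finset.sum_comm
      _ = 0 := by
          apply Finset.sum_eq_zero
          intro k hk
          have hks : k < s.card :=
            lt_of_le_of_lt (Nat.lt_succ_iff.mp (Finset.mem_range.mp hk)) hdeg
          rw [← Finset.mul_sum, h k hks, mul_zero]
  have hsingle : ∑ x ∈ s, P.eval x * f x = P.eval x0 * f x0 := by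
    apply Finset.sum_eq_single_of_mem x0 hx0
    intro y hy hne
    have : P.eval y = 0 := by
      rw [hP, Polynomial.eval_prod]
      apply Finset.prod_eq_zero (Finset.mem_erase.mpr ⟨hne, hy⟩)
      simp
    rw [this, zero_mul]
  have hne0 : P.eval x0 ≠ 0 := by
    rw [hP, Polynomial.eval_prod]
    apply Finset.prod_ne_zero_iff.mpr
    intro y hy
    have hyne := (Finset.mem_erase.mp hy).1
    simp [sub_ne_zero, Ne.symm hyne]
  have := hsingle ▸ key
  exact (mul_eq_zero.mp this).resolve_left hne0

private lemma fiber_sum {N : ℕ} (a b : Fin N → ℝ) (S : Finset ℝ)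
    (hS : ∀ j, a j ∈ S) (k : ℕ) :
    ∑ x ∈ S, x ^ k * (∑ j ∈ Finset.univ.filter (fun j => a j = x), b j)
      = ∑ j, a j ^ k * b j := by
  rw [← Finset.sum_fiberwise_of_maps_to (fun j _ => hS j) (fun j => a j ^ k * b j)]
  apply Finset.sum_congr rfl
  intro x _
  rw [Finset.mul_sum]
  apply Finset.sum_congr rfl
  intro j hj
  rw [(Finset.mem_filter.mp hj).2]

theorem stmt_5 (N : ℕ) (hN : 1 ≤ N) (α₁ β₁ α₂ β₂ : Fin N → ℝ)
    (hα₁ : Function.Injective α₁) (hα₂ : Function.Injective α₂)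
    (hβ₁ : ∀ j, β₁ j ≠ 0) (hβ₂ : ∀ j, β₂ j ≠ 0)
    (h : ∀ k : ℕ, k < 2 * N →
      iteratedDeriv k (fun t : ℝ => ∑ j, Real.exp (t * α₁ j) * β₁ j) 0 =
        iteratedDeriv k (fun t : ℝ => ∑ j, Real.exp (t * α₂ j) * β₂ j) 0) :
    (Finset.univ.val.map fun j => (α₁ j, β₁ j)) =
        (Finset.univ.val.map fun j => (α₂ j, β₂ j)) ∧
      ∀ t : ℝ, ∑ j, Real.exp (t * α₁ j) * β₁ j = ∑ j, Real.exp (t * α₂ j) * β₂ j := by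
  -- moments
  have hm : ∀ k : ℕ, k < 2 * N → ∑ j, α₁ j ^ k * β₁ j = ∑ j, α₂ j ^ k * β₂ j := by
    intro k hk
    have := h k hk
    rw [expsum_iteratedDeriv, expsum_iteratedDeriv] at this
    simpa using this
  set S : Finset ℝ := (Finset.univ.image α₁) ∪ (Finset.univ.image α₂) with hSdef
  have hS1 : ∀ j, α₁ j ∈ S := fun j =>
    Finset.mem_union_left _ (Finset.mem_image_of_mem α₁ (Finset.mem_univ j))
  have hS2 : ∀ j, α₂ j ∈ S := fun j =>
    Finset.mem_union_right _ (Finset.mem_image_of_mem α₂ (Finset.mem_univ j))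
  have hScard : S.card ≤ 2 * N := by
    calc S.card ≤ (Finset.univ.image α₁).card + (Finset.univ.image α₂).card :=
          Finset.card_union_le _ _
      _ ≤ N + N := by
          apply add_le_add <;>
            simpa using Finset.card_image_le.trans (le_of_eq (by simp))
      _ = 2 * N := by ring
  set g : ℝ → ℝ := fun x =>
    (∑ j ∈ Finset.univ.filter (fun j => α₁ j = x), β₁ j)
      - (∑ j ∈ Finset.univ.filter (fun j => α₂ j = x), β₂ j) with hgdef
  have hgzero : ∀ x ∈ S, g x = 0 := by
    apply vandermonde_vanish
    intro k hk
    have hk2 : k < 2 * N := lt_of_lt_of_le hk hScard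
    simp only [hgdef, mul_sub]
    rw [Finset.sum_sub_distrib, fiber_sum α₁ β₁ S hS1 k, fiber_sum α₂ β₂ S hS2 k,
      hm k hk2, sub_self]
  -- for each j, find matching i
  have hmatch : ∀ j : Fin N, ∃ i : Fin N, α₂ i = α₁ j ∧ β₂ i = β₁ j := by
    intro j
    have h0 := hgzero (α₁ j) (hS1 j)
    have hfil1 : Finset.univ.filter (fun i => α₁ i = α₁ j) = {j} := by
      ext i
      simp only [Finset.mem_filter, Finset.mem_univ, true_and, Finset.mem_singleton]
      exact ⟨fun hi => hα₁ hi, fun hi => by rw [hi]⟩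
    rw [hgdef] at h0
    simp only [hfil1, Finset.sum_singleton, sub_eq_zero] at h0
    -- h0 : β₁ j = ∑ i in filter (α₂ i = α₁ j), β₂ i
    by_cases hne : (Finset.univ.filter (fun i => α₂ i = α₁ j)).Nonempty
    · obtain ⟨i, hi⟩ := hne
      have hfil2 : Finset.univ.filter (fun i' => α₂ i' = α₁ j) = {i} := by
        ext i'
        simp only [Finset.mem_filter, Finset.mem_univ, true_and, Finset.mem_singleton]
        have hi' := (Finset.mem_filter.mp hi).2
        exact ⟨fun hh => hα₂ (hh.trans hi'.symm), fun hh => by rw [hh]; exact hi'⟩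
      rw [hfil2, Finset.sum_singleton] at h0
      exact ⟨i, (Finset.mem_filter.mp hi).2, h0.symm⟩
    · rw [Finset.not_nonempty_iff_eq_empty.mp hne, Finset.sum_empty] at h0
      exact absurd h0 (hβ₁ j)
  -- multiset equality
  have hnodup1 : (Finset.univ.val.map fun j => (α₁ j, β₁ j)).Nodup := by
    apply Multiset.Nodup.map _ Finset.univ.nodup
    intro i j hij
    exact hα₁ (congrArg Prod.fst hij)
  have hsubset : (Finset.univ.val.map fun j => (α₁ j, β₁ j))
      ⊆ (Finset.univ.val.map fun j => (α₂ j, β₂ j)) := by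
    intro p hp
    obtain ⟨j, _, hj⟩ := Multiset.mem_map.mp hp
    obtain ⟨i, hi1, hi2⟩ := hmatch j
    exact Multiset.mem_map.mpr ⟨i, by simp, by
      rw [← hj]; exact Prod.ext hi1 hi2⟩
  have hle : (Finset.univ.val.map fun j => (α₁ j, β₁ j))
      ≤ (Finset.univ.val.map fun j => (α₂ j, β₂ j)) :=
    (Multiset.le_iff_subset hnodup1).mpr hsubset
  have heq : (Finset.univ.val.map fun j => (α₁ j, β₁ j))
      = (Finset.univ.val.map fun j => (α₂ j, β₂ j)) := by
    apply Multiset.eq_of_le_of_card_le hle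
    simp
  refine ⟨heq, fun t => ?_⟩
  have := congrArg (fun m => (Multiset.map (fun p : ℝ × ℝ => Real.exp (t * p.1) * p.2) m).sum) heq
  simpa [Multiset.map_map, Finset.sum, Function.comp_def] using this
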